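/- For all integers k, ℓ with 0 ≤ k < ℓ: P(Ñ_1 + ... + Ñ_ℓ > 0 and K^(ℓ) = k) = P(Ñ = 0)^k · P(Ñ > 0). -/

import Mathlib

open MeasureTheory ProbabilityTheory

/-- The minimum of `f` over a finite set of indices, with the convention that the minimum
of the empty collection is `d`. -/
noncomputable def minOr (d : ℝ) (s : Finset ℕ) (f : ℕ → ℝ) : ℝ :=
  if h : s.Nonempty then (s.image f).min' (h.image f) else d

/-- Let `Ñ` be an `ℕ`-valued random variable, `Ñ₁, Ñ₂, …` i.i.d. copies of
`Ñ`, and, independently, `U₁, U₂, …` i.i.d. Uniform[0,1] random variables. For `ℓ ≥ 1` set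
`S^{(ℓ)} := min{U_k : Ñ_k ≥ 1, 1 ≤ k ≤ ℓ}` (min ∅ := 2) and
`K^{(ℓ)} := #{k ≤ ℓ : U_k < S^{(ℓ)}}`. Then for all `0 ≤ k < ℓ`:
`P(Ñ₁ + ⋯ + Ñ_ℓ > 0, K^{(ℓ)} = k) = P(Ñ = 0)^k · P(Ñ > 0)`. -/
theorem stmt2 {Ω : Type*} [MeasurableSpace Ω] (P : Measure Ω) [IsProbabilityMeasure P]
    (Ntilde : Ω → ℕ) (Nk : ℕ → Ω → ℕ) (U : ℕ → Ω → ℝ)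
    (hNtmeas : Measurable Ntilde) (hNkmeas : ∀ k, Measurable (Nk k))
    (hUmeas : ∀ k, Measurable (U k))
    (hNid : ∀ k, IdentDistrib (Nk k) Ntilde P P)
    (hUlaw : ∀ k, Measure.map (U k) P = volume.restrict (Set.Icc (0 : ℝ) 1))
    (hNindep : iIndepFun Nk P)
    (hUindep : iIndepFun U P)
    (hNU : Indep (⨆ k, MeasurableSpace.comap (Nk k) inferInstance)
      (⨆ k, MeasurableSpace.comap (U k) inferInstance) P)
    (Smin : ℕ → Ω → ℝ)
    (hSmin : ∀ l ω, Smin l ω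
      = minOr 2 ((Finset.range l).filter fun k => 1 ≤ Nk k ω) (fun k => U k ω))
    (K : ℕ → Ω → ℕ)
    (hK : ∀ l ω, K l ω = ((Finset.range l).filter fun k => U k ω < Smin l ω).card)
    (k ℓ : ℕ) (hkℓ : k < ℓ) :
    P {ω | 0 < (∑ j ∈ Finset.range ℓ, Nk j ω) ∧ K ℓ ω = k}
      = (P {ω | Ntilde ω = 0}) ^ k * P {ω | 0 < Ntilde ω} := by
  classical
  have hkl' : k ∈ Finset.range ℓ := Finset.mem_range.2 hkℓ
  have hmUle : (⨆ i, MeasurableSpace.comap (U i) inferInstance : MeasurableSpace Ω)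
      ≤ ‹MeasurableSpace Ω› := iSup_le fun i => (hUmeas i).comap_le
  have hmNle : (⨆ i, MeasurableSpace.comap (Nk i) inferInstance : MeasurableSpace Ω)
      ≤ ‹MeasurableSpace Ω› := iSup_le fun i => (hNkmeas i).comap_le
  have hUm' : ∀ i, Measurable[⨆ i, MeasurableSpace.comap (U i) inferInstance] (U i) := fun i =>
    Measurable.of_comap_le (le_iSup (fun j => MeasurableSpace.comap (U j) inferInstance) i)
  -- the index set and the basic events
  set I : Finset (ℕ × Finset ℕ) :=
    ((Finset.range ℓ) ×ˢ ((Finset.range ℓ).powersetCard k)).filter (fun p => p.1 ∉ p.2) with hIdef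
  have hI : ∀ p : ℕ × Finset ℕ, p ∈ I ↔
      p.1 ∈ Finset.range ℓ ∧ p.2 ⊆ Finset.range ℓ ∧ p.2.card = k ∧ p.1 ∉ p.2 := by
    intro p
    simp only [hIdef, Finset.mem_filter, Finset.mem_product, Finset.mem_powersetCard]
    tauto
  set G : ℕ × Finset ℕ → Set Ω := fun p =>
    {ω | (∀ j ∈ p.2, U j ω < U p.1 ω) ∧
      ∀ j ∈ Finset.range ℓ \ insert p.1 p.2, U p.1 ω < U j ω} with hGdef
  set F : ℕ × Finset ℕ → Set Ω := fun p =>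
    {ω | 1 ≤ Nk p.1 ω ∧ ∀ j ∈ p.2, Nk j ω = 0} with hFdef
  set T : Set Ω :=
    {ω | ∀ i ∈ Finset.range ℓ, ∀ j ∈ Finset.range ℓ, i ≠ j → U i ω ≠ U j ω} with hTdef
  -- measurability
  have hGmeasU : ∀ p : ℕ × Finset ℕ,
      MeasurableSet[⨆ i, MeasurableSpace.comap (U i) inferInstance] (G p) := by
    intro p
    have h1 : ∀ i j : ℕ,
        MeasurableSet[⨆ i, MeasurableSpace.comap (U i) inferInstance] {ω | U i ω < U j ω} :=
      fun i j => measurableSet_lt (hUm' i) (hUm' j)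
    have hGe : G p = (⋂ j ∈ p.2, {ω | U j ω < U p.1 ω}) ∩
        ⋂ j ∈ Finset.range ℓ \ insert p.1 p.2, {ω | U p.1 ω < U j ω} := by
      ext ω
      simp only [hGdef, Set.mem_setOf_eq, Set.mem_inter_iff, Set.mem_iInter]
    rw [hGe]
    exact (Finset.measurableSet_biInter _ fun j _ => h1 j p.1).inter
      (Finset.measurableSet_biInter _ fun j _ => h1 p.1 j)
  have hNm' : ∀ i, Measurable[⨆ i, MeasurableSpace.comap (Nk i) inferInstance] (Nk i) := fun i =>
    Measurable.of_comap_le (le_iSup (fun j => MeasurableSpace.comap (Nk j) inferInstance) i)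
  have hFmeasN : ∀ p : ℕ × Finset ℕ,
      MeasurableSet[⨆ i, MeasurableSpace.comap (Nk i) inferInstance] (F p) := by
    intro p
    have hFe : F p = (Nk p.1 ⁻¹' {n | 1 ≤ n}) ∩ ⋂ j ∈ p.2, Nk j ⁻¹' {0} := by
      ext ω
      simp only [hFdef, Set.mem_setOf_eq, Set.mem_inter_iff, Set.mem_iInter, Set.mem_preimage,
        Set.mem_singleton_iff]
    rw [hFe]
    exact ((hNm' p.1) ((Set.to_countable _).measurableSet)).inter
      (Finset.measurableSet_biInter _ fun j _ => (hNm' j) ((Set.to_countable _).measurableSet))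
  have hGmeas : ∀ p, MeasurableSet (G p) := fun p => hmUle _ (hGmeasU p)
  have hFmeas : ∀ p, MeasurableSet (F p) := fun p => hmNle _ (hFmeasN p)
  -- ties are null
  have hties : ∀ i j : ℕ, i ≠ j → P {ω | U i ω = U j ω} = 0 := by
    intro i j hij
    set μ := volume.restrict (Set.Icc (0:ℝ) 1) with hμ
    have hpair : Measurable fun ω => (U i ω, U j ω) := (hUmeas i).prodMk (hUmeas j)
    have hmap : Measure.map (fun ω => (U i ω, U j ω)) P = μ.prod μ := by
      rw [(indepFun_iff_map_prod_eq_prod_map_map (hUmeas i).aemeasurable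
        (hUmeas j).aemeasurable).1 (hUindep.indepFun hij), hUlaw i, hUlaw j]
    have hdiag : MeasurableSet {q : ℝ × ℝ | q.1 = q.2} :=
      measurableSet_eq_fun measurable_fst measurable_snd
    have hset : {ω | U i ω = U j ω} = (fun ω => (U i ω, U j ω)) ⁻¹' {q : ℝ × ℝ | q.1 = q.2} := rfl
    rw [hset, ← Measure.map_apply hpair hdiag, hmap, Measure.prod_apply hdiag]
    have hzero : ∀ x : ℝ, μ (Prod.mk x ⁻¹' {q : ℝ × ℝ | q.1 = q.2}) = 0 := by
      intro x
      have hx : Prod.mk x ⁻¹' {q : ℝ × ℝ | q.1 = q.2} = {x} := by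
        ext y; simp [eq_comm]
      rw [hx, hμ, Measure.restrict_apply (measurableSet_singleton x)]
      exact measure_mono_null Set.inter_subset_left Real.volume_singleton
    simp [hzero]
  have hTnull : P Tᶜ = 0 := by
    have hsub : Tᶜ ⊆ ⋃ q ∈ ((Finset.range ℓ ×ˢ Finset.range ℓ).filter fun q => q.1 ≠ q.2),
        {ω | U q.1 ω = U q.2 ω} := by
      intro ω hω
      simp only [hTdef, Set.mem_compl_iff, Set.mem_setOf_eq, not_forall] at hω
      obtain ⟨i, hi, j, hj, hij, heq⟩ := hω
      refine Set.mem_iUnion₂.2 ⟨(i, j), ?_, not_not.1 heq⟩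
      simp only [Finset.mem_filter, Finset.mem_product]
      exact ⟨⟨hi, hj⟩, hij⟩
    refine measure_mono_null hsub ?_
    refine (measure_biUnion_null_iff (Finset.countable_toSet _)).2 ?_
    intro q hq
    exact hties q.1 q.2 (Finset.mem_filter.1 hq).2
  have hTmeas : MeasurableSet T := by
    have hTe : T = ⋂ i ∈ Finset.range ℓ, ⋂ j ∈ Finset.range ℓ,
        {ω | i ≠ j → U i ω ≠ U j ω} := by
      ext ω; simp only [hTdef, Set.mem_setOf_eq, Set.mem_iInter]
    rw [hTe]
    refine Finset.measurableSet_biInter _ fun i _ =>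
      Finset.measurableSet_biInter _ fun j _ => ?_
    by_cases h : i = j
    · simp [h]
    · have he : {ω | i ≠ j → U i ω ≠ U j ω} = {ω | U i ω = U j ω}ᶜ := by
        ext ω; simp [h]
      rw [he]; exact (measurableSet_eq_fun (hUmeas i) (hUmeas j)).compl
  -- on the no-ties event, `G p` determines `p.2` from `p.1`
  have hBfilter : ∀ p ∈ I, ∀ ω ∈ T, ω ∈ G p →
      p.2 = (Finset.range ℓ).filter fun j => U j ω < U p.1 ω := by
    intro p hp ω hω hG
    obtain ⟨hp1, hp2sub, hpcard, hpn⟩ := (hI p).1 hp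
    obtain ⟨hGa, hGb⟩ := hG
    ext j
    simp only [Finset.mem_filter]
    constructor
    · intro hj; exact ⟨hp2sub hj, hGa j hj⟩
    · rintro ⟨hjr, hjlt⟩
      by_contra hjB
      rcases eq_or_ne j p.1 with rfl | hne
      · exact lt_irrefl _ hjlt
      · exact lt_asymm hjlt (hGb j (Finset.mem_sdiff.2 ⟨hjr, by simp [hne, hjB]⟩))
  -- membership in `G` for the canonical pair
  have hGmem : ∀ ω ∈ T, ∀ m ∈ Finset.range ℓ,
      ((Finset.range ℓ).filter fun j => U j ω < U m ω).card = k →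
      ((m, (Finset.range ℓ).filter fun j => U j ω < U m ω) ∈ I ∧
        ω ∈ G (m, (Finset.range ℓ).filter fun j => U j ω < U m ω)) := by
    intro ω hω m hm hcard
    have hmB : m ∉ (Finset.range ℓ).filter fun j => U j ω < U m ω := by
      simp only [Finset.mem_filter]
      exact fun h => lt_irrefl _ h.2
    refine ⟨(hI _).2 ⟨hm, Finset.filter_subset _ _, hcard, hmB⟩, ?_, ?_⟩
    · intro j hj; exact (Finset.mem_filter.1 hj).2
    · intro j hj
      obtain ⟨hjr, hjn⟩ := Finset.mem_sdiff.1 hj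
      simp only [Finset.mem_insert, not_or] at hjn
      obtain ⟨hjm, hjB⟩ := hjn
      have hne : U m ω ≠ U j ω := hω m hm j hjr (fun h => hjm h.symm)
      have hle : ¬ U j ω < U m ω := by
        intro hlt; exact hjB (Finset.mem_filter.2 ⟨hjr, hlt⟩)
      exact lt_of_le_of_ne (not_lt.1 hle) hne
  -- disjointness of the `G p ∩ T`
  have hGdisj : ∀ p ∈ I, ∀ q ∈ I, p ≠ q → ∀ ω ∈ T, ω ∈ G p → ω ∈ G q → False := by
    intro p hp q hq hpq ω hω hGp hGq
    rcases eq_or_ne p.1 q.1 with h1 | h1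
    · apply hpq
      apply Prod.ext h1
      rw [hBfilter p hp ω hω hGp, hBfilter q hq ω hω hGq, h1]
    · have hne := hω p.1 ((hI p).1 hp).1 q.1 ((hI q).1 hq).1 h1
      have key : ∀ a b : ℕ × Finset ℕ, a ∈ I → b ∈ I → ω ∈ G a → ω ∈ G b →
          U a.1 ω < U b.1 ω → False := by
        intro a b ha hb hGa hGb hab
        obtain ⟨ha1, ha2sub, hacard, han⟩ := (hI a).1 ha
        obtain ⟨hb1, hb2sub, hbcard, hbn⟩ := (hI b).1 hb
        have hsub : a.2 ⊆ b.2 := by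
          intro x hx
          rw [hBfilter b hb ω hω hGb]
          rw [hBfilter a ha ω hω hGa] at hx
          simp only [Finset.mem_filter] at hx ⊢
          exact ⟨hx.1, hx.2.trans hab⟩
        have hmem : a.1 ∈ b.2 := by
          rw [hBfilter b hb ω hω hGb]
          exact Finset.mem_filter.2 ⟨ha1, hab⟩
        have hlt := Finset.card_lt_card ⟨hsub, fun h' => han (h' hmem)⟩
        rw [hacard, hbcard] at hlt
        exact lt_irrefl _ hlt
      rcases hne.lt_or_gt with h | h
      · exact key p q hp hq hGp hGq h
      · exact key q p hq hp hGq hGp h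
  have hpairdisj : (↑I : Set (ℕ × Finset ℕ)).PairwiseDisjoint fun p => G p ∩ T := by
    intro p hp q hq hpq
    refine Set.disjoint_left.2 fun ω hωp hωq => ?_
    exact hGdisj p (Finset.mem_coe.1 hp) q (Finset.mem_coe.1 hq) hpq ω hωp.2 hωp.1 hωq.1
  -- existence of the element of rank `k`
  have hrank : ∀ ω ∈ T, ∃ m ∈ Finset.range ℓ,
      ((Finset.range ℓ).filter fun j => U j ω < U m ω).card = k := by
    intro ω hω
    set r : ℕ → ℕ := fun j => ((Finset.range ℓ).filter fun i => U i ω < U j ω).card with hr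
    have hmono : ∀ i ∈ Finset.range ℓ, ∀ j ∈ Finset.range ℓ, U i ω < U j ω → r i < r j := by
      intro i hi j hj hij
      apply Finset.card_lt_card
      constructor
      · intro x hx
        simp only [Finset.mem_filter] at hx ⊢
        exact ⟨hx.1, hx.2.trans hij⟩
      · intro hsub
        have hii : i ∈ (Finset.range ℓ).filter fun x => U x ω < U i ω :=
          hsub (Finset.mem_filter.2 ⟨hi, hij⟩)
        exact lt_irrefl _ (Finset.mem_filter.1 hii).2
    have hinj : Set.InjOn r ↑(Finset.range ℓ) := by
      intro i hi j hj hrij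
      by_contra hneq
      have hne := hω i (Finset.mem_coe.1 hi) j (Finset.mem_coe.1 hj) hneq
      rcases hne.lt_or_gt with h | h
      · exact absurd hrij (Nat.ne_of_lt (hmono i (Finset.mem_coe.1 hi) j (Finset.mem_coe.1 hj) h))
      · exact absurd hrij.symm
          (Nat.ne_of_lt (hmono j (Finset.mem_coe.1 hj) i (Finset.mem_coe.1 hi) h))
    have himg : (Finset.range ℓ).image r = Finset.range ℓ := by
      apply Finset.eq_of_subset_of_card_le
      · intro x hx
        obtain ⟨j, hj, rfl⟩ := Finset.mem_image.1 hx
        have hss : ((Finset.range ℓ).filter fun i => U i ω < U j ω) ⊂ Finset.range ℓ := by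
          refine ⟨Finset.filter_subset _ _, fun h => ?_⟩
          exact lt_irrefl _ (Finset.mem_filter.1 (h hj)).2
        have := Finset.card_lt_card hss
        simpa using this
      · exact le_of_eq (Finset.card_image_of_injOn hinj).symm
    have hkmem : k ∈ (Finset.range ℓ).image r := by rw [himg]; exact hkl'
    obtain ⟨m, hm, hmk⟩ := Finset.mem_image.1 hkmem
    exact ⟨m, hm, hmk⟩
  have hcoverG : ⋃ p ∈ I, (G p ∩ T) = T := by
    apply Set.Subset.antisymm
    · exact Set.iUnion₂_subset fun p _ => Set.inter_subset_right
    · intro ω hω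
      obtain ⟨m, hm, hcard⟩ := hrank ω hω
      obtain ⟨hpI, hpG⟩ := hGmem ω hω m hm hcard
      exact Set.mem_biUnion hpI ⟨hpG, hω⟩
  have hsumG : ∑ p ∈ I, P (G p) = 1 := by
    have h1 : ∀ p ∈ I, P (G p) = P (G p ∩ T) :=
      fun p _ => (measure_inter_conull hTnull).symm
    rw [Finset.sum_congr rfl h1,
      ← measure_biUnion_finset hpairdisj (fun p _ => (hGmeas p).inter hTmeas), hcoverG]
    have := measure_add_measure_compl (μ := P) hTmeas
    rw [hTnull, add_zero, measure_univ] at this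
    exact this
  -- probability of `F p`
  have hPF : ∀ p ∈ I, P (F p) = P {ω | 0 < Ntilde ω} * (P {ω | Ntilde ω = 0}) ^ k := by
    intro p hp
    obtain ⟨hp1, hp2sub, hpcard, hpn⟩ := (hI p).1 hp
    set A : ℕ → Set ℕ := fun j => if j = p.1 then {n | 1 ≤ n} else {0} with hA
    have hFeq : F p = ⋂ j ∈ insert p.1 p.2, Nk j ⁻¹' A j := by
      ext ω
      simp only [hFdef, Set.mem_setOf_eq, Set.mem_iInter, Finset.mem_insert, Set.mem_preimage]
      constructor
      · rintro ⟨h1, h2⟩ j hj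
        rcases hj with rfl | hj
        · simp only [hA, if_pos rfl]; exact h1
        · have hne : j ≠ p.1 := fun h => hpn (h ▸ hj)
          simp only [hA, if_neg hne]
          exact h2 j hj
      · intro h
        refine ⟨?_, fun j hj => ?_⟩
        · have := h p.1 (Or.inl rfl)
          simpa only [hA, if_pos rfl, Set.mem_setOf_eq] using this
        · have hne : j ≠ p.1 := fun h => hpn (h ▸ hj)
          have := h j (Or.inr hj)
          simpa only [hA, if_neg hne, Set.mem_singleton_iff] using this
    rw [hFeq, hNindep.meas_biInter
      (fun j _ => ⟨A j, (Set.to_countable _).measurableSet, rfl⟩),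
      Finset.prod_insert hpn]
    have h1 : P (Nk p.1 ⁻¹' A p.1) = P {ω | 0 < Ntilde ω} := by
      rw [hA]
      simp only [if_pos rfl]
      rw [(hNid p.1).measure_mem_eq ((Set.to_countable _).measurableSet)]
      congr 1
    have h2 : ∀ j ∈ p.2, P (Nk j ⁻¹' A j) = P {ω | Ntilde ω = 0} := by
      intro j hj
      have hne : j ≠ p.1 := fun h => hpn (h ▸ hj)
      rw [hA]
      simp only [if_neg hne]
      rw [(hNid j).measure_mem_eq ((Set.to_countable _).measurableSet)]
      congr 1
    rw [h1, Finset.prod_congr rfl h2, Finset.prod_const, hpcard]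
  -- independence splitting
  have hPE : ∀ p : ℕ × Finset ℕ, P (F p ∩ G p) = P (F p) * P (G p) :=
    fun p => (Indep_iff _ _ _).1 hNU _ _ (hFmeasN p) (hGmeasU p)
  -- decomposition of the target event
  have htargetT : {ω | 0 < (∑ j ∈ Finset.range ℓ, Nk j ω) ∧ K ℓ ω = k} ∩ T
      = ⋃ p ∈ I, (F p ∩ G p ∩ T) := by
    ext ω
    simp only [Set.mem_inter_iff, Set.mem_setOf_eq, Set.mem_iUnion, exists_prop]
    constructor
    · rintro ⟨⟨hsum, hKk⟩, hω⟩
      have hA : ((Finset.range ℓ).filter fun j => 1 ≤ Nk j ω).Nonempty := by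
        by_contra h
        have hz : ∑ j ∈ Finset.range ℓ, Nk j ω = 0 := Finset.sum_eq_zero fun j hj => by
          by_contra hne
          exact h ⟨j, Finset.mem_filter.2 ⟨hj, Nat.one_le_iff_ne_zero.2 hne⟩⟩
        omega
      set Aset := (Finset.range ℓ).filter fun j => 1 ≤ Nk j ω with hAdef
      have hSval : Smin ℓ ω = (Aset.image fun j => U j ω).min' (hA.image _) := by
        rw [hSmin, minOr, dif_pos hA]
      obtain ⟨m, hmA, hmval⟩ :=
        Finset.mem_image.1 ((Aset.image fun j => U j ω).min'_mem (hA.image _))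
      have hmr : m ∈ Finset.range ℓ := (Finset.mem_filter.1 hmA).1
      have hSm : Smin ℓ ω = U m ω := by rw [hSval, hmval]
      rw [hK, hSm] at hKk
      obtain ⟨hpI, hpG⟩ := hGmem ω hω m hmr hKk
      refine ⟨(m, (Finset.range ℓ).filter fun j => U j ω < U m ω), hpI,
        ⟨⟨(Finset.mem_filter.1 hmA).2, ?_⟩, hpG⟩, hω⟩
      intro j hj
      obtain ⟨hjr, hjlt⟩ := Finset.mem_filter.1 hj
      by_contra hne
      have hjA : j ∈ Aset := Finset.mem_filter.2 ⟨hjr, Nat.one_le_iff_ne_zero.2 hne⟩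
      have hle : Smin ℓ ω ≤ U j ω := by
        rw [hSval]
        exact Finset.min'_le _ _ (Finset.mem_image_of_mem _ hjA)
      rw [hSm] at hle
      exact absurd hjlt (not_lt.2 hle)
    · rintro ⟨p, hpI, ⟨⟨hF1, hF2⟩, hGp⟩, hω⟩
      obtain ⟨hp1, hp2sub, hpcard, hpn⟩ := (hI p).1 hpI
      refine ⟨⟨?_, ?_⟩, hω⟩
      · have hle : Nk p.1 ω ≤ ∑ j ∈ Finset.range ℓ, Nk j ω :=
          Finset.single_le_sum (f := fun j => Nk j ω) (fun _ _ => Nat.zero_le _) hp1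
        omega
      · have hp1A : p.1 ∈ (Finset.range ℓ).filter fun j => 1 ≤ Nk j ω :=
          Finset.mem_filter.2 ⟨hp1, hF1⟩
        have hA : ((Finset.range ℓ).filter fun j => 1 ≤ Nk j ω).Nonempty := ⟨p.1, hp1A⟩
        have hSm : Smin ℓ ω = U p.1 ω := by
          rw [hSmin, minOr, dif_pos hA]
          apply le_antisymm
          · exact Finset.min'_le _ _ (Finset.mem_image_of_mem _ hp1A)
          · apply Finset.le_min'
            intro y hy
            obtain ⟨j, hjA, rfl⟩ := Finset.mem_image.1 hy
            obtain ⟨hjr, hjN⟩ := Finset.mem_filter.1 hjA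
            rcases eq_or_ne j p.1 with rfl | hne
            · exact le_refl _
            · have hjB : j ∉ p.2 := fun h => by
                rw [hF2 j h] at hjN; omega
              exact (hGp.2 j (Finset.mem_sdiff.2 ⟨hjr, by simp [hne, hjB]⟩)).le
        rw [hK, hSm, ← hBfilter p hpI ω hω hGp, hpcard]
  -- final calculation
  calc P {ω | 0 < (∑ j ∈ Finset.range ℓ, Nk j ω) ∧ K ℓ ω = k}
      = P ({ω | 0 < (∑ j ∈ Finset.range ℓ, Nk j ω) ∧ K ℓ ω = k} ∩ T) :=
        (measure_inter_conull hTnull).symm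
    _ = P (⋃ p ∈ I, (F p ∩ G p ∩ T)) := by rw [htargetT]
    _ = ∑ p ∈ I, P (F p ∩ G p ∩ T) := by
        refine measure_biUnion_finset ?_ (fun p _ => ((hFmeas p).inter (hGmeas p)).inter hTmeas)
        intro p hp q hq hpq
        refine (hpairdisj hp hq hpq).mono ?_ ?_
        · exact Set.inter_subset_inter_left _ Set.inter_subset_right
        · exact Set.inter_subset_inter_left _ Set.inter_subset_right
    _ = ∑ p ∈ I, P (F p ∩ G p) := Finset.sum_congr rfl fun p _ => measure_inter_conull hTnull
    _ = ∑ p ∈ I, (P {ω | 0 < Ntilde ω} * (P {ω | Ntilde ω = 0}) ^ k) * P (G p) := by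
        refine Finset.sum_congr rfl fun p hp => ?_
        rw [hPE p, hPF p hp]
    _ = (P {ω | 0 < Ntilde ω} * (P {ω | Ntilde ω = 0}) ^ k) * ∑ p ∈ I, P (G p) := by
        rw [← Finset.mul_sum]
    _ = (P {ω | Ntilde ω = 0}) ^ k * P {ω | 0 < Ntilde ω} := by
        rw [hsumG, mul_one, mul_comm]
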